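/- For every θ₁ ∈ ℝ, b₁, b₃ ∈ ℝ and b₂ > 0: inf_{θ₂∈ℝ} P(θ₁, θ₂, b₁, b₂, b₃) ≤ inf_{θ₂∈ℝ} P(θ₁, θ₂, 0, b₂, b₃) = P(θ₁, 0, 0, b₂, b₃). Moreover P(θ₁, 0, 0, b₂, b₃) = (1/π)·exp(θ₁²/2)·Q(θ₁, b₂, b₃). -/

import Mathlib

set_option maxHeartbeats 1000000

open MeasureTheory

/-- The tilted Gaussian integral
`P(θ₁,θ₂,b₁,b₂,b₃) = (1/(2π)) ∬_{t₁ + b₃ ≥ b₂·|t₂ + b₁|} exp(θ₁t₁ + θ₂t₂ − (t₁²+t₂²)/2)`. -/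
noncomputable def Ptilt (θ₁ θ₂ b₁ b₂ b₃ : ℝ) : ℝ :=
  (1 / (2 * Real.pi)) *
    ∫ p : ℝ × ℝ in {p : ℝ × ℝ | b₂ * |p.2 + b₁| ≤ p.1 + b₃},
      Real.exp (θ₁ * p.1 + θ₂ * p.2 - (p.1 ^ 2 + p.2 ^ 2) / 2)

/-- `Q(θ,a₁,a₂) = ∫₀^∞ ∫_{a₁z₂}^∞ exp(−((z₁−θ−a₂)² + z₂²)/2) dz₁ dz₂`. -/
noncomputable def Q (θ a₁ a₂ : ℝ) : ℝ :=
  ∫ z₂ in Set.Ioi (0:ℝ), ∫ z₁ in Set.Ioi (a₁ * z₂),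
    Real.exp (-((z₁ - θ - a₂) ^ 2 + z₂ ^ 2) / 2)

namespace Stmt14Aux

open Real Set

noncomputable def f (θ₁ θ₂ : ℝ) : ℝ × ℝ → ℝ :=
  fun p => Real.exp (θ₁ * p.1 + θ₂ * p.2 - (p.1 ^ 2 + p.2 ^ 2) / 2)

lemma f_pos (θ₁ θ₂ : ℝ) (p : ℝ × ℝ) : 0 < f θ₁ θ₂ p := Real.exp_pos _

lemma integrable_g (θ : ℝ) : Integrable (fun x : ℝ => Real.exp (θ * x - x ^ 2 / 2)) := by
  have h : Integrable (fun x : ℝ =>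
      Real.exp (θ ^ 2 / 2) * Real.exp (-(1/2 : ℝ) * (x - θ) ^ 2)) :=
    ((integrable_exp_neg_mul_sq (by norm_num : (0:ℝ) < 1/2)).comp_sub_right θ).const_mul _
  refine h.congr (Filter.Eventually.of_forall fun x => ?_)
  show Real.exp _ * Real.exp _ = Real.exp _
  rw [← Real.exp_add]
  congr 1
  ring

lemma integrable_f (θ₁ θ₂ : ℝ) : Integrable (f θ₁ θ₂) := by
  have h := (integrable_g θ₁).mul_prod (integrable_g θ₂)
  rw [← Measure.volume_eq_prod] at h
  refine h.congr (Filter.Eventually.of_forall fun p => ?_)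
  show Real.exp _ * Real.exp _ = f θ₁ θ₂ p
  rw [← Real.exp_add]
  congr 1
  ring

def reflE (c : ℝ) : (ℝ × ℝ) ≃ᵐ (ℝ × ℝ) where
  toFun p := (p.1, c - p.2)
  invFun p := (p.1, c - p.2)
  left_inv p := by simp
  right_inv p := by simp
  measurable_toFun := measurable_fst.prodMk (measurable_const.sub measurable_snd)
  measurable_invFun := measurable_fst.prodMk (measurable_const.sub measurable_snd)

lemma reflMP (c : ℝ) :
    MeasurePreserving (fun p : ℝ × ℝ => (p.1, c - p.2)) volume volume := by
  rw [Measure.volume_eq_prod]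
  exact (MeasurePreserving.id volume).prod (Measure.measurePreserving_sub_left volume c)

lemma integral_reflect (c : ℝ) (g : ℝ × ℝ → ℝ) (s : Set (ℝ × ℝ)) :
    ∫ p in (fun p : ℝ × ℝ => (p.1, c - p.2)) ⁻¹' s, g (p.1, c - p.2) = ∫ p in s, g p :=
  (reflMP c).setIntegral_preimage_emb (reflE c).measurableEmbedding g s

def transE (c : ℝ) : (ℝ × ℝ) ≃ᵐ (ℝ × ℝ) where
  toFun p := (p.1, p.2 - c)
  invFun p := (p.1, p.2 + c)
  left_inv p := by simp
  right_inv p := by simp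
  measurable_toFun := measurable_fst.prodMk (measurable_snd.sub measurable_const)
  measurable_invFun := measurable_fst.prodMk (measurable_snd.add measurable_const)

lemma transMP (c : ℝ) :
    MeasurePreserving (fun p : ℝ × ℝ => (p.1, p.2 - c)) volume volume := by
  rw [Measure.volume_eq_prod]
  exact (MeasurePreserving.id volume).prod (measurePreserving_sub_right volume c)

lemma integral_trans (c : ℝ) (g : ℝ × ℝ → ℝ) (s : Set (ℝ × ℝ)) :
    ∫ p in (fun p : ℝ × ℝ => (p.1, p.2 - c)) ⁻¹' s, g (p.1, p.2 - c) = ∫ p in s, g p :=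
  (transMP c).setIntegral_preimage_emb (transE c).measurableEmbedding g s

lemma measS (b₁ b₂ b₃ : ℝ) : MeasurableSet {p : ℝ × ℝ | b₂ * |p.2 + b₁| ≤ p.1 + b₃} :=
  measurableSet_le (((measurable_snd.add_const b₁).abs).const_mul b₂)
    (measurable_fst.add_const b₃)

lemma Ptilt_eq (θ₁ θ₂ b₁ b₂ b₃ : ℝ) :
    Ptilt θ₁ θ₂ b₁ b₂ b₃ =
      (1 / (2 * Real.pi)) * ∫ p in {p : ℝ × ℝ | b₂ * |p.2 + b₁| ≤ p.1 + b₃}, f θ₁ θ₂ p := rfl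

lemma Ptilt_nonneg (θ₁ θ₂ b₁ b₂ b₃ : ℝ) : 0 ≤ Ptilt θ₁ θ₂ b₁ b₂ b₃ := by
  rw [Ptilt_eq]
  exact mul_nonneg (by positivity)
    (setIntegral_nonneg (measS b₁ b₂ b₃) fun p _ => (Real.exp_pos _).le)

lemma L2 (θ₁ θ₂ b₂ b₃ : ℝ) : Ptilt θ₁ 0 0 b₂ b₃ ≤ Ptilt θ₁ θ₂ 0 b₂ b₃ := by
  rw [Ptilt_eq, Ptilt_eq]
  have hs : MeasurableSet {p : ℝ × ℝ | b₂ * |p.2 + 0| ≤ p.1 + b₃} := measS 0 b₂ b₃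
  set s : Set (ℝ × ℝ) := {p : ℝ × ℝ | b₂ * |p.2 + 0| ≤ p.1 + b₃} with hsdef
  have hI : ∀ θ₂' : ℝ, IntegrableOn (f θ₁ θ₂') s := fun θ₂' => (integrable_f θ₁ θ₂').integrableOn
  have key : ∫ p in s, f θ₁ (-θ₂) p = ∫ p in s, f θ₁ θ₂ p := by
    have h := integral_reflect 0 (f θ₁ θ₂) s
    have hpre : (fun p : ℝ × ℝ => (p.1, 0 - p.2)) ⁻¹' s = s := by
      ext p
      simp only [hsdef, mem_preimage, mem_setOf_eq, add_zero, zero_sub, abs_neg]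
    rw [hpre] at h
    rw [← h]
    refine setIntegral_congr_fun hs fun p _ => ?_
    show Real.exp _ = Real.exp _
    congr 1
    ring
  have hmono : ∫ p in s, f θ₁ 0 p ≤ ∫ p in s, (f θ₁ θ₂ p + f θ₁ (-θ₂) p) / 2 := by
    refine setIntegral_mono (hI 0) (((hI θ₂).add (hI (-θ₂))).div_const 2) fun p => ?_
    have e1 : f θ₁ θ₂ p = f θ₁ 0 p * Real.exp (θ₂ * p.2) := by
      show Real.exp _ = Real.exp _ * Real.exp _
      rw [← Real.exp_add]; congr 1; ring
    have e2 : f θ₁ (-θ₂) p = f θ₁ 0 p * Real.exp (-(θ₂ * p.2)) := by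
      show Real.exp _ = Real.exp _ * Real.exp _
      rw [← Real.exp_add]; congr 1; ring
    have h1 := Real.add_one_le_exp (θ₂ * p.2)
    have h2 := Real.add_one_le_exp (-(θ₂ * p.2))
    have h0 : 0 < f θ₁ 0 p := Real.exp_pos _
    rw [e1, e2]
    nlinarith
  have hhalf : ∫ p in s, (f θ₁ θ₂ p + f θ₁ (-θ₂) p) / 2 = ∫ p in s, f θ₁ θ₂ p := by
    rw [integral_div, integral_add (hI θ₂) (hI (-θ₂)), key]
    ring
  have hpi : (0:ℝ) ≤ 1 / (2 * Real.pi) := by positivity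
  exact mul_le_mul_of_nonneg_left (hmono.trans_eq hhalf) hpi

lemma integrable_gshift (θ c : ℝ) :
    Integrable (fun p : ℝ × ℝ => Real.exp (θ * p.1 - (p.1 ^ 2 + (p.2 - c) ^ 2) / 2)) := by
  have h := (integrable_g θ).mul_prod ((integrable_g 0).comp_sub_right c)
  rw [← Measure.volume_eq_prod] at h
  refine h.congr (Filter.Eventually.of_forall fun p => ?_)
  show Real.exp _ * Real.exp _ = Real.exp _
  rw [← Real.exp_add]; congr 1; ring

lemma L3 (θ₁ b₁ b₂ b₃ : ℝ) (hb₂ : 0 < b₂) :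
    Ptilt θ₁ 0 b₁ b₂ b₃ ≤ Ptilt θ₁ 0 0 b₂ b₃ := by
  rw [Ptilt_eq, Ptilt_eq]
  have hs0 : MeasurableSet {p : ℝ × ℝ | b₂ * |p.2 + 0| ≤ p.1 + b₃} := measS 0 b₂ b₃
  set s0 : Set (ℝ × ℝ) := {p : ℝ × ℝ | b₂ * |p.2 + 0| ≤ p.1 + b₃} with hs0def
  set g : ℝ × ℝ → ℝ := fun p => Real.exp (θ₁ * p.1 - (p.1 ^ 2 + (p.2 - b₁) ^ 2) / 2) with hgdef
  have hIg : Integrable g := integrable_gshift θ₁ b₁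
  have hIf : Integrable (f θ₁ 0) := integrable_f θ₁ 0
  -- Step 1: translate
  have step1 : ∫ p in {p : ℝ × ℝ | b₂ * |p.2 + b₁| ≤ p.1 + b₃}, f θ₁ 0 p = ∫ p in s0, g p := by
    have h := integral_trans b₁ (f θ₁ 0) {p : ℝ × ℝ | b₂ * |p.2 + b₁| ≤ p.1 + b₃}
    have hpre : (fun p : ℝ × ℝ => (p.1, p.2 - b₁)) ⁻¹' {p : ℝ × ℝ | b₂ * |p.2 + b₁| ≤ p.1 + b₃}
        = s0 := by
      ext p
      simp only [hs0def, mem_preimage, mem_setOf_eq, add_zero, sub_add_cancel]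
    rw [hpre] at h
    rw [← h]
    refine setIntegral_congr_fun hs0 fun p _ => ?_
    show Real.exp _ = Real.exp _
    congr 1
    ring
  -- Step 2: reflection set
  have hRmeas : MeasurableSet ((fun p : ℝ × ℝ => (p.1, b₁ - p.2)) ⁻¹' s0) :=
    hs0.preimage (measurable_fst.prodMk (measurable_const.sub measurable_snd))
  set t : Set (ℝ × ℝ) := (fun p : ℝ × ℝ => (p.1, b₁ - p.2)) ⁻¹' s0 with htdef
  have hRR : (fun p : ℝ × ℝ => (p.1, b₁ - p.2)) ⁻¹' t = s0 := by
    rw [htdef, ← Set.preimage_comp]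
    have : ((fun p : ℝ × ℝ => (p.1, b₁ - p.2)) ∘ (fun p : ℝ × ℝ => (p.1, b₁ - p.2))) = id := by
      funext p; simp [Function.comp]
    rw [this, Set.preimage_id]
  have hinv : (fun p : ℝ × ℝ => (p.1, b₁ - p.2)) ⁻¹' (s0 ∩ t) = s0 ∩ t := by
    rw [Set.preimage_inter, hRR, htdef, Set.inter_comm]
  -- equality on the symmetric part
  have heq : ∫ p in s0 ∩ t, g p = ∫ p in s0 ∩ t, f θ₁ 0 p := by
    have h := integral_reflect b₁ g (s0 ∩ t)
    rw [hinv] at h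
    rw [← h]
    refine setIntegral_congr_fun (hs0.inter hRmeas) fun p _ => ?_
    show Real.exp _ = Real.exp _
    congr 1
    ring
  -- inequality on the remaining part
  have hle : ∫ p in s0 \ t, g p ≤ ∫ p in s0 \ t, f θ₁ 0 p := by
    refine setIntegral_mono_on hIg.integrableOn hIf.integrableOn (hs0.diff hRmeas)
      fun p hp => ?_
    have h1 : b₂ * |p.2 + 0| ≤ p.1 + b₃ := hp.1
    have h2 : ¬ b₂ * |b₁ - p.2 + 0| ≤ p.1 + b₃ := hp.2
    push_neg at h2
    have habs : |p.2| ≤ |b₁ - p.2| := by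
      rw [add_zero] at h1 h2
      nlinarith [abs_nonneg p.2, abs_nonneg (b₁ - p.2)]
    have hsq : p.2 ^ 2 ≤ (p.2 - b₁) ^ 2 := by
      have := mul_self_le_mul_self (abs_nonneg p.2) habs
      rw [abs_mul_abs_self, abs_mul_abs_self] at this
      nlinarith
    show Real.exp _ ≤ Real.exp _
    rw [Real.exp_le_exp]
    nlinarith
  have split_g := integral_inter_add_diff (f := g) (s := s0) hRmeas hIg.integrableOn
  have split_f := integral_inter_add_diff (f := f θ₁ 0) (s := s0) hRmeas hIf.integrableOn
  have : ∫ p in s0, g p ≤ ∫ p in s0, f θ₁ 0 p := by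
    rw [← split_g, ← split_f, heq]
    exact add_le_add le_rfl hle
  rw [step1]
  exact mul_le_mul_of_nonneg_left this (by positivity)

lemma L4 (θ₁ b₂ b₃ : ℝ) (hb₂ : 0 < b₂) :
    Ptilt θ₁ 0 0 b₂ b₃ = (1 / Real.pi) * Real.exp (θ₁ ^ 2 / 2) * Q θ₁ b₂ b₃ := by
  rw [Ptilt_eq]
  have hIf : Integrable (f θ₁ 0) := integrable_f θ₁ 0
  have hs0 : MeasurableSet {p : ℝ × ℝ | b₂ * |p.2 + 0| ≤ p.1 + b₃} := measS 0 b₂ b₃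
  set s0 : Set (ℝ × ℝ) := {p : ℝ × ℝ | b₂ * |p.2 + 0| ≤ p.1 + b₃} with hs0def
  have hA : MeasurableSet {p : ℝ × ℝ | 0 < p.2 ∧ b₂ * p.2 ≤ p.1 + b₃} :=
    (measurableSet_lt measurable_const measurable_snd).inter
      (measurableSet_le (measurable_snd.const_mul b₂) (measurable_fst.add_const b₃))
  set A : Set (ℝ × ℝ) := {p : ℝ × ℝ | 0 < p.2 ∧ b₂ * p.2 ≤ p.1 + b₃} with hAdef
  have hpos : MeasurableSet {p : ℝ × ℝ | 0 < p.2} :=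
    measurableSet_lt measurable_const measurable_snd
  -- the horizontal line is null
  have hnull : volume {p : ℝ × ℝ | p.2 = 0} = 0 := by
    have : {p : ℝ × ℝ | p.2 = 0} = (univ : Set ℝ) ×ˢ ({0} : Set ℝ) := by
      ext ⟨x, y⟩
      simp [eq_comm]
    rw [this, Measure.volume_eq_prod, Measure.prod_prod]
    simp
  -- split the integral
  have hsplit := integral_inter_add_diff (f := f θ₁ 0) (s := s0) hpos hIf.integrableOn
  have hup : s0 ∩ {p : ℝ × ℝ | 0 < p.2} = A := by
    ext p
    simp only [hs0def, hAdef, mem_inter_iff, mem_setOf_eq]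
    constructor
    · rintro ⟨h, hp⟩; exact ⟨hp, by rwa [add_zero, abs_of_pos hp] at h⟩
    · rintro ⟨hp, h⟩; exact ⟨by rwa [add_zero, abs_of_pos hp], hp⟩
  have hdn : ∫ p in s0 \ {p : ℝ × ℝ | 0 < p.2}, f θ₁ 0 p = ∫ p in A, f θ₁ 0 p := by
    have hae : (s0 \ {p : ℝ × ℝ | 0 < p.2} : Set (ℝ × ℝ)) =ᶠ[ae (volume : Measure (ℝ × ℝ))] (s0 ∩ {p : ℝ × ℝ | p.2 < 0} : Set (ℝ × ℝ)) := by
      rw [ae_eq_set]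
      constructor
      · refine measure_mono_null (fun p hp => ?_) hnull
        rcases hp with ⟨⟨hp1, hp2⟩, hp3⟩
        have h2 : p.2 ≤ 0 := not_lt.1 hp2
        have h3 : ¬ p.2 < 0 := fun hlt => hp3 ⟨hp1, hlt⟩
        show p.2 = 0
        exact le_antisymm h2 (not_lt.1 h3)
      · refine measure_mono_null (fun p hp => ?_) hnull
        rcases hp with ⟨⟨hp1, hp2⟩, hp3⟩
        have hmem : p ∈ s0 \ {p : ℝ × ℝ | 0 < p.2} := ⟨hp1, fun h => (not_lt.2 hp2.le) (mem_setOf_eq ▸ h)⟩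
        exact absurd hmem hp3
    rw [setIntegral_congr_set hae]
    have h := integral_reflect 0 (f θ₁ 0) A
    have hpre : (fun p : ℝ × ℝ => (p.1, 0 - p.2)) ⁻¹' A = s0 ∩ {p : ℝ × ℝ | p.2 < 0} := by
      ext p
      simp only [hAdef, hs0def, mem_preimage, mem_inter_iff, mem_setOf_eq]
      constructor
      · rintro ⟨h1, h2⟩
        have hneg : p.2 < 0 := by linarith
        exact ⟨by rw [add_zero, abs_of_neg hneg]; linarith, hneg⟩
      · rintro ⟨h1, h2⟩
        rw [add_zero, abs_of_neg h2] at h1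
        exact ⟨by linarith, by linarith⟩
    rw [hpre] at h
    rw [← h]
    refine setIntegral_congr_fun (hs0.inter (measurableSet_lt measurable_snd measurable_const))
      fun p _ => ?_
    show Real.exp _ = Real.exp _
    congr 1
    ring
  have hdouble : ∫ p in s0, f θ₁ 0 p = 2 * ∫ p in A, f θ₁ 0 p := by
    rw [← hsplit, hup, hdn]; ring
  -- Fubini
  set J : ℝ := ∫ y in Ioi (0:ℝ), ∫ x in Ioi (b₂ * y - b₃), f θ₁ 0 (x, y) with hJdef
  have hfub : ∫ p in A, f θ₁ 0 p = J := by
    rw [← integral_indicator hA]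
    have hint : Integrable (A.indicator (f θ₁ 0)) := hIf.indicator hA
    rw [Measure.volume_eq_prod] at hint ⊢
    rw [integral_prod_symm _ hint]
    have houter : ∀ y : ℝ, (∫ x, A.indicator (f θ₁ 0) (x, y)) =
        (Ioi (0:ℝ)).indicator (fun y => ∫ x in Ioi (b₂ * y - b₃), f θ₁ 0 (x, y)) y := by
      intro y
      by_cases hy : 0 < y
      · rw [Set.indicator_of_mem (mem_Ioi.2 hy)]
        have hx : ∀ x : ℝ, A.indicator (f θ₁ 0) (x, y) =
            (Ici (b₂ * y - b₃)).indicator (fun x => f θ₁ 0 (x, y)) x := by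
          intro x
          by_cases hge : b₂ * y - b₃ ≤ x
          · rw [Set.indicator_of_mem (mem_Ici.2 hge),
              Set.indicator_of_mem (show (x, y) ∈ A from ⟨hy, by simp; linarith⟩)]
          · rw [Set.indicator_of_notMem (fun hmem : (x, y) ∈ A => hge (by simp at hge ⊢; linarith [hmem.2])),
              Set.indicator_of_notMem (by simpa using hge)]
        simp_rw [hx]
        rw [integral_indicator measurableSet_Ici, integral_Ici_eq_integral_Ioi]
      · rw [Set.indicator_of_notMem (by simpa using hy)]
        have hx : ∀ x : ℝ, A.indicator (f θ₁ 0) (x, y) = 0 := fun x =>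
          Set.indicator_of_notMem (fun hmem => hy hmem.1) _
        simp_rw [hx, integral_zero]
    rw [hJdef, ← integral_indicator measurableSet_Ioi]
    exact integral_congr_ae (Filter.Eventually.of_forall houter)
  -- relate J and Q
  have hQ : Q θ₁ b₂ b₃ = Real.exp (-(θ₁ ^ 2) / 2) * J := by
    have hinner : ∀ z₂ : ℝ,
        (∫ z₁ in Ioi (b₂ * z₂), Real.exp (-((z₁ - θ₁ - b₃) ^ 2 + z₂ ^ 2) / 2)) =
        Real.exp (-(θ₁ ^ 2) / 2) * ∫ x in Ioi (b₂ * z₂ - b₃), f θ₁ 0 (x, z₂) := by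
      intro z₂
      have h := (measurePreserving_add_right volume b₃).setIntegral_preimage_emb
        (MeasurableEquiv.addRight b₃).measurableEmbedding
        (fun z₁ => Real.exp (-((z₁ - θ₁ - b₃) ^ 2 + z₂ ^ 2) / 2)) (Ioi (b₂ * z₂))
      have hpre : (fun x : ℝ => x + b₃) ⁻¹' Ioi (b₂ * z₂) = Ioi (b₂ * z₂ - b₃) := by
        ext x
        simp [mem_Ioi, sub_lt_iff_lt_add]
      rw [hpre] at h
      rw [← h, ← integral_const_mul]
      refine setIntegral_congr_fun measurableSet_Ioi fun x _ => ?_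
      show Real.exp _ = Real.exp _ * Real.exp _
      rw [← Real.exp_add]
      congr 1
      ring
    show (∫ z₂ in Ioi (0:ℝ), ∫ z₁ in Ioi (b₂ * z₂),
        Real.exp (-((z₁ - θ₁ - b₃) ^ 2 + z₂ ^ 2) / 2)) = _
    simp_rw [hinner]
    rw [integral_const_mul, hJdef]
  rw [hdouble, hfub, hQ]
  have hexp : Real.exp (θ₁ ^ 2 / 2) * Real.exp (-(θ₁ ^ 2) / 2) = 1 := by
    rw [← Real.exp_add, show θ₁ ^ 2 / 2 + -(θ₁ ^ 2) / 2 = (0:ℝ) by ring, Real.exp_zero]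
  rw [show (1:ℝ) / Real.pi * Real.exp (θ₁ ^ 2 / 2) * (Real.exp (-(θ₁ ^ 2) / 2) * J) =
      Real.exp (θ₁ ^ 2 / 2) * Real.exp (-(θ₁ ^ 2) / 2) * (1 / Real.pi * J) by ring,
    hexp, one_mul]
  ring

end Stmt14Aux

theorem stmt14 (θ₁ b₁ b₃ b₂ : ℝ) (hb₂ : 0 < b₂) :
    (⨅ θ₂ : ℝ, Ptilt θ₁ θ₂ b₁ b₂ b₃) ≤ (⨅ θ₂ : ℝ, Ptilt θ₁ θ₂ 0 b₂ b₃) ∧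
    (⨅ θ₂ : ℝ, Ptilt θ₁ θ₂ 0 b₂ b₃) = Ptilt θ₁ 0 0 b₂ b₃ ∧
    Ptilt θ₁ 0 0 b₂ b₃ = (1 / Real.pi) * Real.exp (θ₁ ^ 2 / 2) * Q θ₁ b₂ b₃ := by
  have hbdd : ∀ b₁' : ℝ, BddBelow (Set.range fun θ₂ => Ptilt θ₁ θ₂ b₁' b₂ b₃) := fun b₁' =>
    ⟨0, fun x hx => by
      obtain ⟨θ₂, rfl⟩ := hx
      exact Stmt14Aux.Ptilt_nonneg θ₁ θ₂ b₁' b₂ b₃⟩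
  have h2 : (⨅ θ₂ : ℝ, Ptilt θ₁ θ₂ 0 b₂ b₃) = Ptilt θ₁ 0 0 b₂ b₃ :=
    le_antisymm (ciInf_le (hbdd 0) 0) (le_ciInf fun θ₂ => Stmt14Aux.L2 θ₁ θ₂ b₂ b₃)
  have h1 : (⨅ θ₂ : ℝ, Ptilt θ₁ θ₂ b₁ b₂ b₃) ≤ (⨅ θ₂ : ℝ, Ptilt θ₁ θ₂ 0 b₂ b₃) := by
    rw [h2]
    exact (ciInf_le (hbdd b₁) 0).trans (Stmt14Aux.L3 θ₁ b₁ b₂ b₃ hb₂)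
  exact ⟨h1, h2, Stmt14Aux.L4 θ₁ b₂ b₃ hb₂⟩
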